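/- Let $h_0 > 0$, $d, \mu > 0$ with $h_0 < \frac{\pi}{2}\sqrt{d/\mu}$, so that $\lambda_1 := \frac{d\pi^2}{4h_0^2} > \mu$. Let $k > 0$ be such that $x\phi'(x) \leq k\phi(x)$ on $[-h_0,h_0]$ for $\phi(x) = \sin(\pi(x+h_0)/(2h_0))$. Define, for $0 < \varepsilon, \rho < 1$, $s(t) = 1+2\varepsilon - \varepsilon e^{-\rho t}$ and $w(t,x) = K e^{-\rho t}\phi(x/s(t))$ on $\{(t,x) : t \geq 0, |x| \leq h_0 s(t)\}$. Then there exists $\delta > 0$ such that for all $0 < \varepsilon, \rho \leq \delta$ and all $K > 0$, $w_t - d\,w_{xx} - \mu w > 0$ for all $t > 0$ and $|x| < h_0 s(t)$. -/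

import Mathlib

open Real Set

private lemma aux_num (lam μ k δ : ℝ) (hμ : 0 < μ) (hk : 0 < k) (hlamμ : μ < lam)
    (hδpos : 0 < δ) (hδ1 : δ ≤ 1) (hδ2 : 2*δ*(8*lam+9+9*k) ≤ lam - μ) :
    (μ+δ+k*δ^2) * (1+2*δ)^2 < lam := by
  have hd2 : δ^2 ≤ δ := by nlinarith
  have hd3 : δ^3 ≤ δ := by nlinarith [sq_nonneg δ]
  have hd4 : δ^4 ≤ δ := by nlinarith [sq_nonneg δ, sq_nonneg (δ^2)]
  nlinarith [mul_le_mul_of_nonneg_left hd2 hμ.le, mul_le_mul_of_nonneg_left hd2 hk.le,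
    mul_le_mul_of_nonneg_left hd3 hk.le, mul_le_mul_of_nonneg_left hd4 hk.le,
    mul_lt_mul_of_pos_right hlamμ hδpos]

private lemma aux_r (ε ρ E S δ : ℝ) (hε : 0 < ε) (hρ : 0 < ρ) (hεδ : ε ≤ δ)
    (hρδ : ρ ≤ δ) (hδpos : 0 < δ) (hE : 0 < E) (hE1 : E < 1) (hS : 1 < S) :
    ε*ρ*E/S ≤ δ^2 := by
  have hS0 : 0 < S := by linarith
  rw [div_le_iff₀ hS0]
  nlinarith [mul_pos hε hρ, mul_le_mul hεδ hρδ hρ.le hδpos.le,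
    mul_nonneg (mul_nonneg hε.le hρ.le) (sub_nonneg.mpr hE1.le),
    mul_nonneg (mul_nonneg hδpos.le hδpos.le) (sub_nonneg.mpr hS.le)]

private lemma aux_Qr (k δ sθ Q r : ℝ) (hk : 0 < k) (hsθ : 0 < sθ)
    (hQ : Q ≤ k*sθ) (hr0 : 0 < r) (hrδ : r ≤ δ^2) : Q*r ≤ k*δ^2*sθ := by
  nlinarith [mul_le_mul_of_nonneg_right hQ hr0.le,
    mul_le_mul_of_nonneg_left hrδ (mul_pos hk hsθ).le]

private lemma aux_final (μ k δ ρ lam sθ Q r A : ℝ)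
    (hsθ : 0 < sθ) (hρδ : ρ ≤ δ) (hQr : Q*r ≤ k*δ^2*sθ)
    (hA : sθ*(lam/(1+2*δ)^2) ≤ A)
    (hδmain : μ + δ + k*δ^2 < lam/(1+2*δ)^2) :
    0 < -(ρ*sθ) - Q*r + A - μ*sθ := by
  nlinarith [mul_lt_mul_of_pos_left hδmain hsθ, mul_le_mul_of_nonneg_right hρδ hsθ.le]

theorem stmt_11 (d μ h₀ : ℝ) (hd : 0 < d) (hμ : 0 < μ) (hh₀ : 0 < h₀)
    (hcrit : h₀ < π / 2 * Real.sqrt (d / μ))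
    (φ : ℝ → ℝ) (hφ : ∀ x, φ x = Real.sin (π * (x + h₀) / (2 * h₀)))
    (k : ℝ) (hk : 0 < k)
    (hkφ : ∀ x ∈ Icc (-h₀) h₀, x * deriv φ x ≤ k * φ x) :
    ∃ δ > 0, ∀ ε ρ : ℝ, 0 < ε → ε ≤ δ → 0 < ρ → ρ ≤ δ → ∀ K > (0:ℝ),
      ∀ (s : ℝ → ℝ) (w : ℝ → ℝ → ℝ),
      (∀ t : ℝ, s t = 1 + 2 * ε - ε * Real.exp (-ρ * t)) →
      (∀ (t x : ℝ), w t x = K * Real.exp (-ρ * t) * φ (x / s t)) →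
      ∀ t > (0:ℝ), ∀ x : ℝ, |x| < h₀ * s t →
        deriv (fun τ => w τ x) t - d * deriv (deriv (fun y => w t y)) x
          - μ * w t x > 0 := by
  have hπ : 0 < π := Real.pi_pos
  obtain ⟨lam, hlam⟩ : ∃ lam : ℝ, lam = d * (π / (2 * h₀)) ^ 2 := ⟨_, rfl⟩
  have hlampos : 0 < lam := by rw [hlam]; positivity
  have hlamμ : μ < lam := by
    have hsq : (π / 2 * Real.sqrt (d / μ)) ^ 2 = (π/2)^2 * (d/μ) := by
      rw [mul_pow, Real.sq_sqrt (by positivity)]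
    have h1 : h₀ ^ 2 < (π/2)^2 * (d/μ) := by
      nlinarith [Real.sqrt_nonneg (d/μ), hcrit, hh₀, sq_nonneg (π / 2 * Real.sqrt (d / μ))]
    have h1' : h₀^2 * μ < (π/2)^2 * d := by
      have h2 := mul_lt_mul_of_pos_right h1 hμ
      rwa [mul_assoc, div_mul_cancel₀ d (ne_of_gt hμ)] at h2
    have h3 : lam = d * π^2 / (2*h₀)^2 := by rw [hlam]; ring
    rw [h3, lt_div_iff₀ (by positivity)]
    nlinarith [h1']
  obtain ⟨δ, hδdef⟩ : ∃ δ : ℝ, δ = min 1 ((lam - μ)/(2*(8*lam+9+9*k))) := ⟨_, rfl⟩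
  have hδpos : 0 < δ := by
    rw [hδdef]
    exact lt_min one_pos (div_pos (by linarith) (by positivity))
  have hδ1 : δ ≤ 1 := by rw [hδdef]; exact min_le_left _ _
  have hδ2 : 2*δ*(8*lam+9+9*k) ≤ lam - μ := by
    have h := min_le_right (1:ℝ) ((lam - μ)/(2*(8*lam+9+9*k)))
    rw [← hδdef, le_div_iff₀ (by positivity)] at h
    linarith
  have hden : (0:ℝ) < (1+2*δ)^2 := by positivity
  have hδmain : μ + δ + k*δ^2 < lam/(1+2*δ)^2 :=
    (lt_div_iff₀ hden).mpr (aux_num lam μ k δ hμ hk hlamμ hδpos hδ1 hδ2)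
  refine ⟨δ, hδpos, ?_⟩
  intro ε ρ hε hεδ hρ hρδ K hK s w hs hw t ht x hx
  obtain ⟨E, hE⟩ : ∃ E : ℝ, E = Real.exp (-ρ * t) := ⟨_, rfl⟩
  have hEpos : 0 < E := by rw [hE]; exact Real.exp_pos _
  have hE1 : E < 1 := by
    rw [hE]
    apply Real.exp_lt_one_iff.mpr
    have := mul_pos hρ ht
    linarith
  obtain ⟨S, hSdef⟩ : ∃ S : ℝ, S = 1 + 2*ε - ε*E := ⟨_, rfl⟩
  have hSt : s t = S := by rw [hs t, ← hE, hSdef]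
  have hS1 : 1 < S := by
    have h1 := mul_lt_mul_of_pos_left hE1 hε
    have h2 := mul_pos hε hEpos
    rw [hSdef]; linarith
  have hS2 : S < 1 + 2*ε := by
    have h2 := mul_pos hε hEpos
    rw [hSdef]; linarith
  have hSpos : 0 < S := by linarith
  have hSne : S ≠ 0 := ne_of_gt hSpos
  obtain ⟨θ, hθ⟩ : ∃ θ : ℝ, θ = π * (x / S + h₀) / (2 * h₀) := ⟨_, rfl⟩
  rw [hSt] at hx
  have hxS : |x / S| < h₀ := by
    rw [abs_div, abs_of_pos hSpos]
    exact (div_lt_iff₀ hSpos).mpr (by linarith [hx])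
  obtain ⟨hy1, hy2⟩ := abs_lt.mp hxS
  have hθ1 : 0 < θ := by
    rw [hθ]
    exact div_pos (mul_pos hπ (by linarith)) (by linarith)
  have hθ2 : θ < π := by
    rw [hθ, div_lt_iff₀ (by linarith)]
    exact mul_lt_mul_of_pos_left (by linarith) hπ
  have hsinθ : 0 < Real.sin θ := Real.sin_pos_of_pos_of_lt_pi hθ1 hθ2
  -- derivative of φ
  have hφ' : ∀ y : ℝ, HasDerivAt φ (Real.cos (π*(y+h₀)/(2*h₀)) * (π/(2*h₀))) y := by
    intro y
    have h1 : HasDerivAt (fun z : ℝ => π*(z+h₀)/(2*h₀)) (π/(2*h₀)) y := by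
      have h0 := (((hasDerivAt_id y).add_const h₀).const_mul π).div_const (2*h₀)
      refine h0.congr_deriv ?_
      ring
    have hfe : φ = fun z => Real.sin (π*(z+h₀)/(2*h₀)) := funext hφ
    rw [hfe]
    exact h1.sin
  have hkey : (x/S) * (Real.cos θ * (π/(2*h₀))) ≤ k * Real.sin θ := by
    have hmem : x/S ∈ Icc (-h₀) h₀ := ⟨le_of_lt hy1, le_of_lt hy2⟩
    have h := hkφ (x/S) hmem
    rw [(hφ' (x/S)).deriv, hφ (x/S), ← hθ] at h
    exact h
  -- time derivative
  have hft : (fun τ => w τ x) = fun τ => K * Real.exp (-ρ*τ) *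
      Real.sin (π * (x / (1+2*ε-ε*Real.exp (-ρ*τ)) + h₀) / (2*h₀)) := by
    funext τ
    rw [hw, hs, hφ]
  have hsder : HasDerivAt (fun τ => 1+2*ε-ε*Real.exp (-ρ*τ)) (ε*ρ*E) t := by
    have h1 : HasDerivAt (fun τ : ℝ => -ρ*τ) (-ρ) t := by
      simpa using (hasDerivAt_id t).const_mul (-ρ)
    have h4 := (hasDerivAt_const t (1+2*ε)).sub (h1.exp.const_mul ε)
    refine h4.congr_deriv ?_
    rw [hE]; ring
  have hquot : HasDerivAt (fun τ => x / (1+2*ε-ε*Real.exp (-ρ*τ))) (-(x*(ε*ρ*E))/S^2) t := by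
    have hne : (1+2*ε-ε*Real.exp (-ρ*t)) ≠ 0 := by rw [← hE, ← hSdef]; exact hSne
    have h0 := (hasDerivAt_const t x).div hsder hne
    refine h0.congr_deriv ?_
    rw [← hE, ← hSdef]
    ring
  have hθt : HasDerivAt (fun τ => π * (x / (1+2*ε-ε*Real.exp (-ρ*τ)) + h₀) / (2*h₀))
      (π * (-(x*(ε*ρ*E))/S^2) / (2*h₀)) t :=
    ((hquot.add_const h₀).const_mul π).div_const (2*h₀)
  have hKE : HasDerivAt (fun τ => K * Real.exp (-ρ*τ)) (K*(E*(-ρ))) t := by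
    have h1 : HasDerivAt (fun τ : ℝ => -ρ*τ) (-ρ) t := by
      simpa using (hasDerivAt_id t).const_mul (-ρ)
    have h0 := h1.exp.const_mul K
    refine h0.congr_deriv ?_
    rw [hE]
  have hft' : HasDerivAt (fun τ => w τ x)
      (K*(E*(-ρ)) * Real.sin θ + K*E*(Real.cos θ * (π * (-(x*(ε*ρ*E))/S^2) / (2*h₀)))) t := by
    rw [hft]
    have h0 := hKE.mul hθt.sin
    rw [← hE, ← hSdef, ← hθ] at h0
    exact h0
  -- space derivatives
  have hgx : (fun y => w t y) = fun y => K * E * Real.sin (π * (y / S + h₀) / (2*h₀)) := by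
    funext y
    rw [hw, hφ, hs, ← hE, ← hSdef]
  have hinner : ∀ y : ℝ, HasDerivAt (fun z : ℝ => π * (z / S + h₀) / (2*h₀)) (π * (1/S) / (2*h₀)) y := by
    intro y
    have h0 := ((((hasDerivAt_id y).div_const S).add_const h₀).const_mul π).div_const (2*h₀)
    exact h0
  have hG : ∀ y : ℝ, HasDerivAt (fun z : ℝ => K * E * Real.sin (π * (z / S + h₀) / (2*h₀)))
      (K * E * (Real.cos (π * (y / S + h₀) / (2*h₀)) * (π * (1/S) / (2*h₀)))) y := by
    intro y
    exact ((hinner y).sin).const_mul (K*E)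
  have hderiv1 : deriv (fun y => w t y) =
      fun y => K * E * (Real.cos (π * (y / S + h₀) / (2*h₀)) * (π * (1/S) / (2*h₀))) := by
    rw [hgx]
    funext y
    exact (hG y).deriv
  have hG2 : HasDerivAt (fun y : ℝ => K * E * (Real.cos (π * (y / S + h₀) / (2*h₀)) * (π * (1/S) / (2*h₀))))
      (K * E * ((-Real.sin θ * (π * (1/S) / (2*h₀))) * (π * (1/S) / (2*h₀)))) x := by
    have h0 := ((hinner x).cos.mul_const (π * (1/S) / (2*h₀))).const_mul (K*E)
    rw [← hθ] at h0
    exact h0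
  have hxx : deriv (deriv (fun y => w t y)) x
      = K * E * ((-Real.sin θ * (π * (1/S) / (2*h₀))) * (π * (1/S) / (2*h₀))) := by
    rw [hderiv1]
    exact hG2.deriv
  have hwtx : w t x = K * E * Real.sin θ := by
    rw [hw, hφ, hSt, ← hE, ← hθ]
  rw [hft'.deriv, hxx, hwtx]
  have hGoalEq : K*(E*(-ρ)) * Real.sin θ + K*E*(Real.cos θ * (π * (-(x*(ε*ρ*E))/S^2) / (2*h₀)))
      - d * (K * E * ((-Real.sin θ * (π * (1/S) / (2*h₀))) * (π * (1/S) / (2*h₀))))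
      - μ * (K * E * Real.sin θ)
      = K*E*( -(ρ*Real.sin θ) - ((x/S)*(Real.cos θ*(π/(2*h₀))))*(ε*ρ*E/S)
          + Real.sin θ*(d*((π/(2*h₀))/S)^2) - μ*Real.sin θ ) := by
    field_simp
    ring
  rw [hGoalEq]
  have hr0 : 0 < ε*ρ*E/S := by positivity
  have hrδ : ε*ρ*E/S ≤ δ^2 := aux_r ε ρ E S δ hε hρ hεδ hρδ hδpos hEpos hE1 hS1
  have h1 : ((x/S)*(Real.cos θ*(π/(2*h₀))))*(ε*ρ*E/S) ≤ k*δ^2*Real.sin θ :=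
    aux_Qr k δ (Real.sin θ) _ _ hk hsinθ hkey hr0 hrδ
  have hSsq : S < 1+2*δ := by linarith
  have h2 : lam/(1+2*δ)^2 ≤ d*((π/(2*h₀))/S)^2 := by
    have heq : d*((π/(2*h₀))/S)^2 = lam/S^2 := by rw [hlam]; ring
    rw [heq]
    apply div_le_div_of_nonneg_left hlampos.le (by positivity)
    exact (pow_lt_pow_left₀ hSsq hSpos.le two_ne_zero).le
  have hA : Real.sin θ*(lam/(1+2*δ)^2) ≤ Real.sin θ*(d*((π/(2*h₀))/S)^2) :=
    mul_le_mul_of_nonneg_left h2 hsinθ.le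
  apply mul_pos (mul_pos hK hEpos)
  exact aux_final μ k δ ρ lam (Real.sin θ) _ _ _ hsinθ hρδ h1 hA hδmain
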